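/- Let I be a nonempty open real interval, let f,g : I → ℝ be four times continuously differentiable strictly monotone functions with nonvanishing first derivatives, let p = (p₁,p₂) : I → ℝ₊² be twice continuously differentiable, and let q = (q₁,q₂) : I → ℝ₊². If there exists an open set U ⊆ I² containing the diagonal diag(I²) = {(x,x) : x ∈ I} such that A_{f,p}(x,y) + A_{g,q}(x,y) = x + y holds for all (x,y) ∈ U, then q₁ and q₂ are twice continuously differentiable on I, and the equalities ∂₁A_{f,p} + ∂₁A_{g,q} = 1, ∂₁∂₂A_{f,p} + ∂₁∂₂A_{g,q} = 0, ∂₁²∂₂A_{f,p} + ∂₁²∂₂A_{g,q} = 0, and ∂₁²∂₂²A_{f,p} + ∂₁²∂₂²A_{g,q} = 0 hold at every point of diag(I²). -/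

import Mathlib

open Set

/-- The 2-variable generalized Bajraktarević mean
`A_{f,p}(x,y) = f⁻¹((p₁(x)f(x)+p₂(y)f(y))/(p₁(x)+p₂(y)))`,
where the inverse of `f` is taken on the interval `I`. -/
noncomputable def bajMean (I : Set ℝ) (f p₁ p₂ : ℝ → ℝ) (x y : ℝ) : ℝ :=
  Function.invFunOn f I ((p₁ x * f x + p₂ y * f y) / (p₁ x + p₂ y))

/-- Partial derivative with respect to the first variable. -/
noncomputable def pd1 (M : ℝ → ℝ → ℝ) (x y : ℝ) : ℝ := deriv (fun t => M t y) x

/-- Partial derivative with respect to the second variable. -/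
noncomputable def pd2 (M : ℝ → ℝ → ℝ) (x y : ℝ) : ℝ := deriv (fun t => M x t) y

lemma mean_mem_image {I : Set ℝ} (hIconn : I.OrdConnected) {f : ℝ → ℝ}
    (hfc : ContinuousOn f I) {x y w₁ w₂ : ℝ} (hx : x ∈ I) (hy : y ∈ I)
    (h1 : 0 < w₁) (h2 : 0 < w₂) :
    (w₁ * f x + w₂ * f y) / (w₁ + w₂) ∈ f '' I := by
  have himg : (f '' I).OrdConnected :=
    (hIconn.isPreconnected.image f hfc).ordConnected
  have hsub : uIcc (f x) (f y) ⊆ f '' I :=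
    himg.uIcc_subset ⟨x, hx, rfl⟩ ⟨y, hy, rfl⟩
  apply hsub
  rw [Set.uIcc, Set.mem_Icc]
  constructor
  · rw [le_div_iff₀ (by linarith)]
    rcases le_total (f x) (f y) with h | h
    · have : f x ⊓ f y = f x := inf_eq_left.2 h
      rw [this]; nlinarith
    · have : f x ⊓ f y = f y := inf_eq_right.2 h
      rw [this]; nlinarith
  · rw [div_le_iff₀ (by linarith)]
    rcases le_total (f x) (f y) with h | h
    · have : f x ⊔ f y = f y := sup_eq_right.2 h
      rw [this]; nlinarith
    · have : f x ⊔ f y = f x := sup_eq_left.2 h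
      rw [this]; nlinarith

lemma invFunOn_contDiffAt {I : Set ℝ} (hIopen : IsOpen I) {f : ℝ → ℝ}
    (hf : ContDiffOn ℝ 4 f I) (hinj : Set.InjOn f I)
    (hf' : ∀ x ∈ I, deriv f x ≠ 0) {b : ℝ} (hb : b ∈ f '' I) :
    ContDiffAt ℝ 2 (Function.invFunOn f I) b := by
  obtain ⟨a, ha, rfl⟩ := hb
  have hfa : ContDiffAt ℝ 2 f a := (hf.contDiffAt (hIopen.mem_nhds ha)).of_le (by norm_num)
  have hd : HasDerivAt f (deriv f a) a :=
    (hfa.differentiableAt (by norm_num)).hasDerivAt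
  have hfd := hd.hasFDerivAt_equiv (hf' a ha)
  have hn : (2 : WithTop ℕ∞) ≠ 0 := by norm_num
  have hlinv := hfa.to_localInverse (f' := _) hfd hn
  set S := hfa.hasStrictFDerivAt' hfd hn with hS
  have hR : ∀ᶠ y in nhds (f a), f (S.localInverse f _ a y) = y := S.eventually_right_inverse
  have hC : ContinuousAt (S.localInverse f _ a) (f a) := S.localInverse_continuousAt
  have hmem : ∀ᶠ y in nhds (f a), S.localInverse f _ a y ∈ I := by
    apply hC.eventually_mem
    rw [S.localInverse_apply_image]
    exact hIopen.mem_nhds ha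
  have hev : Function.invFunOn f I =ᶠ[nhds (f a)] S.localInverse f _ a := by
    filter_upwards [hR, hmem] with y h1 h2
    conv_lhs => rw [← h1]
    exact hinj (Function.invFunOn_apply_mem h2) h2 (Function.invFunOn_apply_eq h2)
  exact hlinv.congr_of_eventuallyEq hev

lemma baj_slice {I : Set ℝ} (hIopen : IsOpen I) (hIconn : I.OrdConnected)
    {f p₁ p₂ : ℝ → ℝ} (hf : ContDiffOn ℝ 4 f I) (hinj : Set.InjOn f I)
    (hf' : ∀ x ∈ I, deriv f x ≠ 0)
    (hp1 : ContDiffOn ℝ 2 p₁ I) (hp2 : ContDiffOn ℝ 2 p₂ I)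
    (hp : ∀ x ∈ I, 0 < p₁ x ∧ 0 < p₂ x)
    {x y : ℝ} (hx : x ∈ I) (hy : y ∈ I) :
    ContDiffAt ℝ 2 (fun t => bajMean I f p₁ p₂ t y) x ∧
    ContDiffAt ℝ 2 (fun s => bajMean I f p₁ p₂ x s) y := by
  have hfx : ContDiffAt ℝ 2 f x := (hf.contDiffAt (hIopen.mem_nhds hx)).of_le (by norm_num)
  have hfy : ContDiffAt ℝ 2 f y := (hf.contDiffAt (hIopen.mem_nhds hy)).of_le (by norm_num)
  have hp1x : ContDiffAt ℝ 2 p₁ x := hp1.contDiffAt (hIopen.mem_nhds hx)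
  have hp2y : ContDiffAt ℝ 2 p₂ y := hp2.contDiffAt (hIopen.mem_nhds hy)
  constructor
  · have hh : ContDiffAt ℝ 2
        (fun t => (p₁ t * f t + p₂ y * f y) / (p₁ t + p₂ y)) x := by
      apply ContDiffAt.div
      · exact (hp1x.mul hfx).add contDiffAt_const
      · exact hp1x.add contDiffAt_const
      · have := (hp x hx).1; have := (hp y hy).2; positivity
    have hmem : (p₁ x * f x + p₂ y * f y) / (p₁ x + p₂ y) ∈ f '' I :=
      mean_mem_image hIconn hf.continuousOn hx hy (hp x hx).1 (hp y hy).2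
    exact (invFunOn_contDiffAt hIopen hf hinj hf' hmem).comp x hh
  · have hh : ContDiffAt ℝ 2
        (fun s => (p₁ x * f x + p₂ s * f s) / (p₁ x + p₂ s)) y := by
      apply ContDiffAt.div
      · exact contDiffAt_const.add (hp2y.mul hfy)
      · exact contDiffAt_const.add hp2y
      · have := (hp x hx).1; have := (hp y hy).2; positivity
    have hmem : (p₁ x * f x + p₂ y * f y) / (p₁ x + p₂ y) ∈ f '' I :=
      mean_mem_image hIconn hf.continuousOn hx hy (hp x hx).1 (hp y hy).2
    exact (invFunOn_contDiffAt hIopen hf hinj hf' hmem).comp y hh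

theorem stmt14 (I : Set ℝ) (hIopen : IsOpen I) (hIne : I.Nonempty) (hIconn : I.OrdConnected)
    (f g p₁ p₂ q₁ q₂ : ℝ → ℝ)
    (hf : ContDiffOn ℝ 4 f I) (hg : ContDiffOn ℝ 4 g I)
    (hfm : StrictMonoOn f I ∨ StrictAntiOn f I)
    (hgm : StrictMonoOn g I ∨ StrictAntiOn g I)
    (hf' : ∀ x ∈ I, deriv f x ≠ 0) (hg' : ∀ x ∈ I, deriv g x ≠ 0)
    (hp1 : ContDiffOn ℝ 2 p₁ I) (hp2 : ContDiffOn ℝ 2 p₂ I)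
    (hp : ∀ x ∈ I, 0 < p₁ x ∧ 0 < p₂ x)
    (hq : ∀ x ∈ I, 0 < q₁ x ∧ 0 < q₂ x)
    (U : Set (ℝ × ℝ)) (hUopen : IsOpen U) (hUsub : U ⊆ I ×ˢ I)
    (hUdiag : ∀ x ∈ I, (x, x) ∈ U)
    (hinv : ∀ u ∈ U,
      bajMean I f p₁ p₂ u.1 u.2 + bajMean I g q₁ q₂ u.1 u.2 = u.1 + u.2) :
    ContDiffOn ℝ 2 q₁ I ∧ ContDiffOn ℝ 2 q₂ I ∧
    (∀ x ∈ I, pd1 (bajMean I f p₁ p₂) x x + pd1 (bajMean I g q₁ q₂) x x = 1) ∧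
    (∀ x ∈ I, pd1 (pd2 (bajMean I f p₁ p₂)) x x +
      pd1 (pd2 (bajMean I g q₁ q₂)) x x = 0) ∧
    (∀ x ∈ I, pd1 (pd1 (pd2 (bajMean I f p₁ p₂))) x x +
      pd1 (pd1 (pd2 (bajMean I g q₁ q₂))) x x = 0) ∧
    (∀ x ∈ I, pd1 (pd1 (pd2 (pd2 (bajMean I f p₁ p₂)))) x x +
      pd1 (pd1 (pd2 (pd2 (bajMean I g q₁ q₂)))) x x = 0) := by
  have hfinj : Set.InjOn f I := by rcases hfm with h | h; exacts [h.injOn, h.injOn]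
  have hginj : Set.InjOn g I := by rcases hgm with h | h; exacts [h.injOn, h.injOn]
  set F := bajMean I f p₁ p₂ with hFdef
  set G := bajMean I g q₁ q₂ with hGdef
  have hslice : ∀ {x y : ℝ}, x ∈ I → y ∈ I →
      ContDiffAt ℝ 2 (fun t => F t y) x ∧ ContDiffAt ℝ 2 (fun s => F x s) y :=
    fun hx hy => baj_slice hIopen hIconn hf hfinj hf' hp1 hp2 hp hx hy
  have hFd1 : ∀ a ∈ I, ∀ b ∈ I, DifferentiableAt ℝ (fun t => F t b) a :=
    fun a ha b hb => ((hslice ha hb).1).differentiableAt (by norm_num)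
  have hFd2 : ∀ a ∈ I, ∀ b ∈ I, DifferentiableAt ℝ (fun s => F a s) b :=
    fun a ha b hb => ((hslice ha hb).2).differentiableAt (by norm_num)
  have hGU : ∀ {a b : ℝ}, (a, b) ∈ U → G a b = a + b - F a b := by
    intro a b hab
    have := hinv (a, b) hab
    dsimp at this
    linarith
  have hU1 : ∀ {a b : ℝ}, (a, b) ∈ U → ∀ᶠ t in nhds a, (t, b) ∈ U := fun {a b} h =>
    ((continuous_id.prodMk continuous_const).continuousAt).eventually_mem (hUopen.mem_nhds h)
  have hU2 : ∀ {a b : ℝ}, (a, b) ∈ U → ∀ᶠ s in nhds b, (a, s) ∈ U := fun {a b} h =>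
    ((continuous_const.prodMk continuous_id).continuousAt).eventually_mem (hUopen.mem_nhds h)
  -- key algebraic identity coming from the functional equation
  have key : ∀ a ∈ I, ∀ b ∈ I, (a, b) ∈ U →
      (a + b - F a b ∈ I) ∧
      q₁ a * (g a - g (a + b - F a b)) = q₂ b * (g (a + b - F a b) - g b) := by
    intro a ha b hb hab
    have hBq : (q₁ a * g a + q₂ b * g b) / (q₁ a + q₂ b) ∈ g '' I :=
      mean_mem_image hIconn hg.continuousOn ha hb (hq a ha).1 (hq b hb).2
    obtain ⟨c, hc, hcb⟩ := hBq
    have hex : ∃ c ∈ I, g c = (q₁ a * g a + q₂ b * g b) / (q₁ a + q₂ b) := ⟨c, hc, hcb⟩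
    have hmem : G a b ∈ I := Function.invFunOn_mem hex
    have hgG : g (G a b) = (q₁ a * g a + q₂ b * g b) / (q₁ a + q₂ b) :=
      Function.invFunOn_eq hex
    have hGM : G a b = a + b - F a b := hGU hab
    rw [← hGM]
    refine ⟨hmem, ?_⟩
    have hne : q₁ a + q₂ b ≠ 0 := by
      have := (hq a ha).1; have := (hq b hb).2; positivity
    have h2 : g (G a b) * (q₁ a + q₂ b) = q₁ a * g a + q₂ b * g b := by
      rw [hgG]; field_simp
    linear_combination -h2
  have keyne : ∀ a ∈ I, ∀ b ∈ I, (a, b) ∈ U → a ≠ b →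
      g a - g (a + b - F a b) ≠ 0 ∧ g (a + b - F a b) - g b ≠ 0 := by
    intro a ha b hb hab hne
    obtain ⟨hMI, heq⟩ := key a ha b hb hab
    have hq1a := (hq a ha).1
    have hq2b := (hq b hb).2
    constructor
    · intro h0
      have h1 : g (a + b - F a b) - g b = 0 := by
        rcases mul_eq_zero.1 (heq ▸ (by rw [h0, mul_zero] :
            q₁ a * (g a - g (a + b - F a b)) = 0)) with h | h
        · exact absurd h (ne_of_gt hq2b)
        · exact h
      have : g a = g b := by linarith [sub_eq_zero.1 h0, sub_eq_zero.1 h1]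
      exact hne (hginj ha hb this)
    · intro h0
      have h1 : g a - g (a + b - F a b) = 0 := by
        have h2 : q₁ a * (g a - g (a + b - F a b)) = 0 := by rw [heq, h0, mul_zero]
        rcases mul_eq_zero.1 h2 with h | h
        · exact absurd h (ne_of_gt hq1a)
        · exact h
      have : g a = g b := by linarith [sub_eq_zero.1 h0, sub_eq_zero.1 h1]
      exact hne (hginj ha hb this)
  -- smoothness of q₁
  have hq1smooth : ContDiffOn ℝ 2 q₁ I := by
    intro x₀ hx₀
    apply ContDiffAt.contDiffWithinAt
    obtain ⟨ε, hε, hball⟩ := Metric.isOpen_iff.1 hUopen _ (hUdiag x₀ hx₀)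
    set y₀ := x₀ + ε / 2 with hy₀def
    have hdisty : dist y₀ x₀ = ε / 2 := by
      rw [Real.dist_eq, hy₀def]
      rw [show x₀ + ε / 2 - x₀ = ε / 2 by ring, abs_of_pos (half_pos hε)]
    have hxy₀U : ∀ x, dist x x₀ < ε / 2 → (x, y₀) ∈ U := by
      intro x hx
      apply hball
      rw [Metric.mem_ball, Prod.dist_eq]
      exact max_lt (lt_trans hx (half_lt_self hε)) (hdisty ▸ half_lt_self hε)
    have hy₀U : (x₀, y₀) ∈ U := hxy₀U x₀ (by simpa using half_pos hε)
    have hy₀I : y₀ ∈ I := (hUsub hy₀U).2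
    have hy₀ne : x₀ ≠ y₀ := by
      intro h
      have : ε / 2 = 0 := by rw [hy₀def] at h; linarith [congrArg (· - x₀) h]
      linarith [half_pos hε]
    have hMx₀ : x₀ + y₀ - F x₀ y₀ ∈ I := (key x₀ hx₀ y₀ hy₀I hy₀U).1
    have hden₀ : g x₀ - g (x₀ + y₀ - F x₀ y₀) ≠ 0 :=
      (keyne x₀ hx₀ y₀ hy₀I hy₀U hy₀ne).1
    have hφ : ContDiffAt ℝ 2
        (fun x => q₂ y₀ * (g (x + y₀ - F x y₀) - g y₀) / (g x - g (x + y₀ - F x y₀))) x₀ := by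
      have hM : ContDiffAt ℝ 2 (fun x => x + y₀ - F x y₀) x₀ :=
        (contDiffAt_id.add contDiffAt_const).sub (hslice hx₀ hy₀I).1
      have hgM : ContDiffAt ℝ 2 (fun x => g (x + y₀ - F x y₀)) x₀ :=
        ((hg.contDiffAt (hIopen.mem_nhds hMx₀)).of_le (by norm_num)).comp x₀ hM
      have hgx : ContDiffAt ℝ 2 g x₀ := (hg.contDiffAt (hIopen.mem_nhds hx₀)).of_le (by norm_num)
      exact (contDiffAt_const.mul (hgM.sub contDiffAt_const)).div (hgx.sub hgM) hden₀
    apply hφ.congr_of_eventuallyEq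
    have hballev : ∀ᶠ x in nhds x₀, dist x x₀ < ε / 2 := by
      have : Metric.ball x₀ (ε / 2) ∈ nhds x₀ := Metric.ball_mem_nhds _ (half_pos hε)
      filter_upwards [this] with x hx using hx
    filter_upwards [hballev, eventually_ne_nhds hy₀ne] with x hx hne
    have hxU := hxy₀U x hx
    have hxI : x ∈ I := (hUsub hxU).1
    obtain ⟨hMI, heq⟩ := key x hxI y₀ hy₀I hxU
    have hd := (keyne x hxI y₀ hy₀I hxU hne).1
    rw [eq_div_iff hd]
    exact heq
  -- smoothness of q₂
  have hq2smooth : ContDiffOn ℝ 2 q₂ I := by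
    intro y₁ hy₁
    apply ContDiffAt.contDiffWithinAt
    obtain ⟨ε, hε, hball⟩ := Metric.isOpen_iff.1 hUopen _ (hUdiag y₁ hy₁)
    set a₀ := y₁ + ε / 2 with ha₀def
    have hdista : dist a₀ y₁ = ε / 2 := by
      rw [Real.dist_eq, ha₀def]
      rw [show y₁ + ε / 2 - y₁ = ε / 2 by ring, abs_of_pos (half_pos hε)]
    have ha₀yU : ∀ y, dist y y₁ < ε / 2 → (a₀, y) ∈ U := by
      intro y hy
      apply hball
      rw [Metric.mem_ball, Prod.dist_eq]
      exact max_lt (hdista ▸ half_lt_self hε) (lt_trans hy (half_lt_self hε))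
    have ha₀U : (a₀, y₁) ∈ U := ha₀yU y₁ (by simpa using half_pos hε)
    have ha₀I : a₀ ∈ I := (hUsub ha₀U).1
    have ha₀ne : a₀ ≠ y₁ := by
      intro h
      have : ε / 2 = 0 := by rw [ha₀def] at h; linarith [congrArg (· - y₁) h]
      linarith [half_pos hε]
    have hMy₁ : a₀ + y₁ - F a₀ y₁ ∈ I := (key a₀ ha₀I y₁ hy₁ ha₀U).1
    have hden₀ : g (a₀ + y₁ - F a₀ y₁) - g y₁ ≠ 0 :=
      (keyne a₀ ha₀I y₁ hy₁ ha₀U ha₀ne).2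
    have hφ : ContDiffAt ℝ 2
        (fun y => q₁ a₀ * (g a₀ - g (a₀ + y - F a₀ y)) / (g (a₀ + y - F a₀ y) - g y)) y₁ := by
      have hM : ContDiffAt ℝ 2 (fun y => a₀ + y - F a₀ y) y₁ :=
        (contDiffAt_const.add contDiffAt_id).sub (hslice ha₀I hy₁).2
      have hgM : ContDiffAt ℝ 2 (fun y => g (a₀ + y - F a₀ y)) y₁ :=
        ((hg.contDiffAt (hIopen.mem_nhds hMy₁)).of_le (by norm_num)).comp y₁ hM
      have hgy : ContDiffAt ℝ 2 g y₁ := (hg.contDiffAt (hIopen.mem_nhds hy₁)).of_le (by norm_num)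
      exact (contDiffAt_const.mul (contDiffAt_const.sub hgM)).div (hgM.sub hgy) hden₀
    apply hφ.congr_of_eventuallyEq
    have hballev : ∀ᶠ y in nhds y₁, dist y y₁ < ε / 2 := by
      have : Metric.ball y₁ (ε / 2) ∈ nhds y₁ := Metric.ball_mem_nhds _ (half_pos hε)
      filter_upwards [this] with y hy using hy
    filter_upwards [hballev, eventually_ne_nhds (Ne.symm ha₀ne)] with y hy hne
    have hyU := ha₀yU y hy
    have hyI : y ∈ I := (hUsub hyU).2
    obtain ⟨hMI, heq⟩ := key a₀ ha₀I y hyI hyU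
    have hd := (keyne a₀ ha₀I y hyI hyU (Ne.symm hne)).2
    rw [eq_div_iff hd]
    linear_combination -heq
  -- first order identity on the diagonal
  have claim1 : ∀ x ∈ I, pd1 F x x + pd1 G x x = 1 := by
    intro x hx
    have hxx := hUdiag x hx
    have hev : (fun t => G t x) =ᶠ[nhds x] fun t => t + x - F t x := by
      filter_upwards [hU1 hxx] with t ht using hGU ht
    have hdF := (hFd1 x hx x hx).hasDerivAt
    have hd : HasDerivAt (fun t => t + x - F t x)
        (1 - deriv (fun t => F t x) x) x := ((hasDerivAt_id x).add_const x).sub hdF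
    have : pd1 G x x = 1 - deriv (fun t => F t x) x := by
      rw [pd1, hev.deriv_eq, hd.deriv]
    rw [this, pd1]
    ring
  -- pointwise identities on U for higher derivatives
  have stepA : ∀ a b : ℝ, (a, b) ∈ U → pd2 G a b = 1 - pd2 F a b := by
    intro a b hab
    obtain ⟨ha, hb⟩ := hUsub hab
    have hev : (fun s => G a s) =ᶠ[nhds b] fun s => a + s - F a s := by
      filter_upwards [hU2 hab] with s hs using hGU hs
    have hdF := (hFd2 a ha b hb).hasDerivAt
    have hd : HasDerivAt (fun s => a + s - F a s)
        (1 - deriv (fun s => F a s) b) b := ((hasDerivAt_id b).const_add a).sub hdF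
    rw [pd2, hev.deriv_eq, hd.deriv, pd2]
  have stepB : ∀ a b : ℝ, (a, b) ∈ U → pd1 (pd2 G) a b = -(pd1 (pd2 F) a b) := by
    intro a b hab
    have hev : (fun t => pd2 G t b) =ᶠ[nhds a] fun t => 1 - pd2 F t b := by
      filter_upwards [hU1 hab] with t ht using stepA t b ht
    rw [pd1, hev.deriv_eq, deriv_const_sub, pd1]
  have stepA2 : ∀ a b : ℝ, (a, b) ∈ U → pd2 (pd2 G) a b = -(pd2 (pd2 F) a b) := by
    intro a b hab
    have hev : (fun s => pd2 G a s) =ᶠ[nhds b] fun s => 1 - pd2 F a s := by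
      filter_upwards [hU2 hab] with s hs using stepA a s hs
    rw [pd2, hev.deriv_eq, deriv_const_sub, pd2]
  have stepB2 : ∀ a b : ℝ, (a, b) ∈ U →
      pd1 (pd2 (pd2 G)) a b = -(pd1 (pd2 (pd2 F)) a b) := by
    intro a b hab
    have hev : (fun t => pd2 (pd2 G) t b) =ᶠ[nhds a] fun t => -(pd2 (pd2 F) t b) := by
      filter_upwards [hU1 hab] with t ht using stepA2 t b ht
    rw [pd1, hev.deriv_eq, deriv.fun_neg, pd1]
  have stepC : ∀ a b : ℝ, (a, b) ∈ U →
      pd1 (pd1 (pd2 G)) a b = -(pd1 (pd1 (pd2 F)) a b) := by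
    intro a b hab
    have hev : (fun t => pd1 (pd2 G) t b) =ᶠ[nhds a] fun t => -(pd1 (pd2 F) t b) := by
      filter_upwards [hU1 hab] with t ht using stepB t b ht
    rw [pd1, hev.deriv_eq, deriv.fun_neg, pd1]
  have stepC2 : ∀ a b : ℝ, (a, b) ∈ U →
      pd1 (pd1 (pd2 (pd2 G))) a b = -(pd1 (pd1 (pd2 (pd2 F))) a b) := by
    intro a b hab
    have hev : (fun t => pd1 (pd2 (pd2 G)) t b) =ᶠ[nhds a]
        fun t => -(pd1 (pd2 (pd2 F)) t b) := by
      filter_upwards [hU1 hab] with t ht using stepB2 t b ht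
    rw [pd1, hev.deriv_eq, deriv.fun_neg, pd1]
  refine ⟨hq1smooth, hq2smooth, claim1, ?_, ?_, ?_⟩
  · intro x hx
    have := stepB x x (hUdiag x hx)
    linarith
  · intro x hx
    have := stepC x x (hUdiag x hx)
    linarith
  · intro x hx
    have := stepC2 x x (hUdiag x hx)
    linarith
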